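/- Let A be a simply connected finite-dimensional k-algebra that is not Schurian. Then A is τ-tilting infinite. -/

import Mathlib

open Quiver
set_option linter.unusedSectionVars false

/-- The path algebra of a quiver `V` over a field `k`: the free `k`-module on
the set of all paths in `V`, with multiplication induced by concatenation of
paths (composable paths concatenate, non-composable products vanish). -/
abbrev PathAlgebra (k V : Type) [Field k] [Quiver.{1} V] : Type 1 :=
  (Σ a b : V, Quiver.Path a b) →₀ k

namespace PathAlgebra

variable {k V : Type} [Field k] [Quiver.{1} V] [Fintype V] [DecidableEq V]

/-- Transport of a path along an equality of its source. -/
def castPath {a b c : V} (h : a = b) (p : Quiver.Path b c) : Quiver.Path a c := by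
  subst h; exact p

@[simp] lemma castPath_rfl {a c : V} (p : Quiver.Path a c) : castPath rfl p = p := rfl

/-- Product of two basis paths: their concatenation if they are composable,
and `0` otherwise. -/
noncomputable def mulIdx (p q : Σ a b : V, Quiver.Path a b) : PathAlgebra k V :=
  if h : p.2.1 = q.1 then
    Finsupp.single ⟨p.1, q.2.1, p.2.2.comp (castPath h q.2.2)⟩ 1
  else 0

/-- Multiplication on the path algebra, as a bilinear map. -/
noncomputable def mulL :
    PathAlgebra k V →ₗ[k] PathAlgebra k V →ₗ[k] PathAlgebra k V :=
  Finsupp.lsum k fun p =>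
    LinearMap.toSpanSingleton k _
      (Finsupp.lsum k fun q => LinearMap.toSpanSingleton k _ (mulIdx p q))

noncomputable instance : Mul (PathAlgebra k V) := ⟨fun x y => mulL x y⟩

lemma mul_def (x y : PathAlgebra k V) : x * y = mulL x y := rfl

lemma single_mul_single (p q : Σ a b : V, Quiver.Path a b) (a b : k) :
    (Finsupp.single p a * Finsupp.single q b : PathAlgebra k V)
      = (a * b) • mulIdx p q := by
  rw [mul_def, mulL]
  simp [Finsupp.lsum_single, LinearMap.toSpanSingleton_apply, smul_smul]

noncomputable instance : One (PathAlgebra k V) :=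
  ⟨∑ a : V, Finsupp.single ⟨a, a, Quiver.Path.nil⟩ 1⟩

lemma one_def : (1 : PathAlgebra k V)
    = ∑ a : V, Finsupp.single ⟨a, a, Quiver.Path.nil⟩ 1 := rfl

private lemma zero_mul' (x : PathAlgebra k V) : 0 * x = 0 := by
  rw [mul_def, map_zero]; rfl

private lemma mul_zero' (x : PathAlgebra k V) : x * 0 = 0 := by
  rw [mul_def, map_zero]

private lemma add_mul' (x y z : PathAlgebra k V) : (x + y) * z = x * z + y * z := by
  rw [mul_def, mul_def, mul_def, map_add]; rfl

private lemma mul_add' (x y z : PathAlgebra k V) : x * (y + z) = x * y + x * z := by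
  rw [mul_def, mul_def, mul_def, map_add]

private lemma smul_mul' (c : k) (x y : PathAlgebra k V) : (c • x) * y = c • (x * y) := by
  rw [mul_def, mul_def, map_smul]; rfl

private lemma mul_smul' (c : k) (x y : PathAlgebra k V) : x * (c • y) = c • (x * y) := by
  rw [mul_def, mul_def, map_smul]

private lemma mul_assoc' (x y z : PathAlgebra k V) : x * y * z = x * (y * z) := by
  induction x using Finsupp.induction_linear with
  | zero => rw [zero_mul', zero_mul', zero_mul']
  | add f g hf hg => rw [add_mul', add_mul', add_mul', hf, hg]
  | single p xp =>
    induction y using Finsupp.induction_linear with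
    | zero => rw [zero_mul', mul_zero', zero_mul']
    | add f g hf hg => rw [mul_add', add_mul', add_mul', mul_add', hf, hg]
    | single q xq =>
      induction z using Finsupp.induction_linear with
      | zero => rw [mul_zero', mul_zero', mul_zero']
      | add f g hf hg => rw [mul_add', mul_add', mul_add', hf, hg]
      | single r xr =>
        obtain ⟨a1, a2, f⟩ := p
        obtain ⟨a3, a4, g⟩ := q
        obtain ⟨a5, a6, h⟩ := r
        rw [single_mul_single, single_mul_single, smul_mul', mul_smul']
        by_cases h12 : a2 = a3
        · subst h12
          by_cases h45 : a4 = a5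
          · subst h45
            simp [mulIdx, single_mul_single, smul_smul, Quiver.Path.comp_assoc,
              mul_assoc, mul_comm, mul_left_comm]
          · simp [mulIdx, h45, single_mul_single, smul_smul, mul_zero', zero_mul']
        · by_cases h45 : a4 = a5
          · subst h45
            simp [mulIdx, h12, single_mul_single, smul_smul, mul_zero', zero_mul']
          · simp [mulIdx, h12, h45, single_mul_single, smul_smul, mul_zero', zero_mul']

private lemma one_mul' (x : PathAlgebra k V) : 1 * x = x := by
  induction x using Finsupp.induction_linear with
  | zero => rw [mul_zero']
  | add f g hf hg => rw [mul_add', hf, hg]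
  | single p xp =>
    obtain ⟨a, b, f⟩ := p
    rw [one_def, mul_def, map_sum, LinearMap.sum_apply]
    have : ∀ c : V,
        (mulL (Finsupp.single ⟨c, c, Quiver.Path.nil⟩ (1 : k)))
          (Finsupp.single ⟨a, b, f⟩ xp)
        = if c = a then Finsupp.single ⟨a, b, f⟩ xp else 0 := by
      intro c
      rw [← mul_def, single_mul_single, one_mul, mulIdx]
      by_cases hca : c = a
      · subst hca
        simp [Quiver.Path.nil_comp, Finsupp.smul_single]
      · simp [hca]
    rw [Finset.sum_congr rfl fun c _ => this c]
    simp

private lemma mul_one' (x : PathAlgebra k V) : x * 1 = x := by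
  induction x using Finsupp.induction_linear with
  | zero => rw [zero_mul']
  | add f g hf hg => rw [add_mul', hf, hg]
  | single p xp =>
    obtain ⟨a, b, f⟩ := p
    rw [one_def, mul_def, map_sum]
    have : ∀ c : V,
        (mulL (Finsupp.single ⟨a, b, f⟩ xp))
          (Finsupp.single ⟨c, c, Quiver.Path.nil⟩ (1 : k))
        = if c = b then Finsupp.single ⟨a, b, f⟩ xp else 0 := by
      intro c
      rw [← mul_def, single_mul_single, mul_one, mulIdx]
      by_cases hcb : b = c
      · subst hcb
        simp [Finsupp.smul_single]
      · simp [hcb, Ne.symm hcb]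
    rw [Finset.sum_congr rfl fun c _ => this c]
    simp

noncomputable instance instRing : Ring (PathAlgebra k V) :=
  { (inferInstanceAs (AddCommGroup (PathAlgebra k V)) : AddCommGroup (PathAlgebra k V)) with
    mul := (· * ·)
    one := 1
    mul_assoc := mul_assoc'
    one_mul := one_mul'
    mul_one := mul_one'
    left_distrib := mul_add'
    right_distrib := add_mul'
    zero_mul := zero_mul'
    mul_zero := mul_zero' }

noncomputable instance instAlgebra : Algebra k (PathAlgebra k V) :=
  Algebra.ofModule smul_mul' mul_smul'

end PathAlgebra
/-- A brick: a (finite-dimensional) module all of whose nonzero endomorphisms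
are invertible. -/
def IsBrick (A : Type) [Ring A] (M : ModuleCat.{0} A) : Prop :=
  Module.Finite A M ∧ Nontrivial M ∧ ∀ f : M →ₗ[A] M, f ≠ 0 → Function.Bijective f

/-- τ-tilting finiteness, via the Demonet–Iyama–Jasso characterization:
there are only finitely many isomorphism classes of bricks. -/
def IsTauTiltingFinite (A : Type) [Ring A] : Prop :=
  ∃ (n : ℕ) (M : Fin n → ModuleCat.{0} A),
    ∀ N : ModuleCat.{0} A, IsBrick A N → ∃ i, Nonempty (N ≃ₗ[A] M i)
/-- An idempotent is primitive if it is nonzero and cannot be written as the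
sum of two nonzero orthogonal idempotents. -/
def IsPrimitiveIdempotent {R : Type} [Ring R] (e : R) : Prop :=
  IsIdempotentElem e ∧ e ≠ 0 ∧
    ∀ a b : R, IsIdempotentElem a → IsIdempotentElem b →
      a * b = 0 → b * a = 0 → a + b = e → a = 0 ∨ b = 0

/-- A complete set of primitive orthogonal idempotents: pairwise orthogonal
primitive idempotents summing to `1`. -/
def IsCompleteSetOfPrimitiveOrthogonalIdempotents {R : Type} [Ring R]
    {ι : Type} [Fintype ι] (e : ι → R) : Prop :=
  (∀ i, IsPrimitiveIdempotent (e i)) ∧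
    (∀ i j, i ≠ j → e i * e j = 0) ∧ (∑ i, e i = 1)

/-- `φ` presents `A` as a bound quiver algebra `kQ/I` with `I = ker φ` an
admissible ideal: `φ` is surjective, `ker φ ⊆ R_Q²` (every element of the
kernel is supported on paths of length at least `2`), and `R_Q^m ⊆ ker φ` for
some `m` (every path of length at least `m` lies in the kernel). -/
def IsAdmissiblePresentation {k V A : Type} [Field k] [Quiver.{1} V]
    [Fintype V] [DecidableEq V] [Ring A] [Algebra k A]
    (φ : PathAlgebra k V →ₐ[k] A) : Prop :=
  Function.Surjective φ ∧
  (∀ x : PathAlgebra k V, φ x = 0 → ∀ p ∈ Finsupp.support x, 2 ≤ p.2.2.length) ∧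
  ∃ m : ℕ, ∀ p : Σ a b : V, Quiver.Path a b, m ≤ p.2.2.length →
    φ (Finsupp.single p 1) = 0

/-- The homotopy relation on walks of a bound quiver `(Q, I)` (with
`K = I` the kernel of the presentation): the smallest equivalence relation
on walks (paths in the symmetrified quiver) such that `α α⁻¹` and `α⁻¹ α`
are homotopic to trivial walks, the two branches of any minimal relation in
`I` are homotopic, and which is compatible with composition of walks. -/
inductive HomotopicRel {k V : Type} [Field k] [Quiver.{1} V]
    (K : Set (PathAlgebra k V)) :
    ∀ {a b : Quiver.Symmetrify V}, Quiver.Path a b → Quiver.Path a b → Prop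
  | refl {a b : Quiver.Symmetrify V} (p : Quiver.Path a b) : HomotopicRel K p p
  | symm {a b : Quiver.Symmetrify V} {p q : Quiver.Path a b} :
      HomotopicRel K p q → HomotopicRel K q p
  | trans {a b : Quiver.Symmetrify V} {p q r : Quiver.Path a b} :
      HomotopicRel K p q → HomotopicRel K q r → HomotopicRel K p r
  | cancel_fwd {a b : V} (e : a ⟶ b) :
      HomotopicRel K ((Quiver.Path.nil.cons e.toPos).cons e.toNeg)
        Quiver.Path.nil
  | cancel_bwd {a b : V} (e : a ⟶ b) :
      HomotopicRel K ((Quiver.Path.nil.cons e.toNeg).cons e.toPos)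
        Quiver.Path.nil
  | comp_left {a b c : Quiver.Symmetrify V} (w : Quiver.Path c a)
      {p q : Quiver.Path a b} :
      HomotopicRel K p q → HomotopicRel K (w.comp p) (w.comp q)
  | comp_right {a b c : Quiver.Symmetrify V} {p q : Quiver.Path a b}
      (w : Quiver.Path b c) :
      HomotopicRel K p q → HomotopicRel K (p.comp w) (q.comp w)
  | rel {a b : V} (x : PathAlgebra k V) (hx : x ∈ K)
      (hends : ∀ s ∈ Finsupp.support x, s.1 = a ∧ s.2.1 = b)
      (hcard : 2 ≤ (Finsupp.support x).card)
      (hmin : ∀ S : Finset (Σ a b : V, Quiver.Path a b),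
        S ⊂ Finsupp.support x → S.Nonempty →
        (∑ p ∈ S, Finsupp.single p (x p)) ∉ K)
      (p q : Quiver.Path a b)
      (hp : (⟨a, b, p⟩ : Σ a b : V, Quiver.Path a b) ∈ Finsupp.support x)
      (hq : (⟨a, b, q⟩ : Σ a b : V, Quiver.Path a b) ∈ Finsupp.support x) :
      HomotopicRel K (Quiver.Symmetrify.of.mapPath p)
        (Quiver.Symmetrify.of.mapPath q)

/-- A presentation is triangular, connected, and has trivial fundamental
group: the quiver is acyclic, the underlying graph is connected, and any
closed walk is homotopic to the trivial walk. -/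
def PresentationTriangularConnectedTrivialPi1 {k V A : Type} [Field k]
    [Quiver.{1} V] [Fintype V] [DecidableEq V] [Ring A] [Algebra k A]
    (φ : PathAlgebra k V →ₐ[k] A) : Prop :=
  (∀ (a : V) (p : Quiver.Path a a), p.length = 0) ∧
  (∀ a b : Quiver.Symmetrify V, Nonempty (Quiver.Path a b)) ∧
  (∀ (a : Quiver.Symmetrify V) (w : Quiver.Path a a),
    HomotopicRel {x | φ x = 0} w Quiver.Path.nil)

/-- A simply connected algebra: a connected triangular algebra such that the
fundamental group of every (bound quiver) presentation is trivial. -/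
def IsSimplyConnectedAlg (k A : Type) [Field k] [Ring A] [Algebra k A] : Prop :=
  (∃ (n : ℕ) (G : Quiver.{1} (Fin n))
      (φ : @PathAlgebra k (Fin n) ‹Field k› G →ₐ[k] A),
    @IsAdmissiblePresentation k (Fin n) A ‹Field k› G
      (inferInstanceAs (Fintype (Fin n))) (inferInstanceAs (DecidableEq (Fin n)))
      ‹Ring A› ‹Algebra k A› φ) ∧
  ∀ (n : ℕ) (G : Quiver.{1} (Fin n))
      (φ : @PathAlgebra k (Fin n) ‹Field k› G →ₐ[k] A),
    @IsAdmissiblePresentation k (Fin n) A ‹Field k› G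
      (inferInstanceAs (Fintype (Fin n))) (inferInstanceAs (DecidableEq (Fin n)))
      ‹Ring A› ‹Algebra k A› φ →
    @PresentationTriangularConnectedTrivialPi1 k (Fin n) A ‹Field k› G
      (inferInstanceAs (Fintype (Fin n))) (inferInstanceAs (DecidableEq (Fin n)))
      ‹Ring A› ‹Algebra k A› φ

/-- The subspace `e R f = {e x f : x ∈ R}` of an algebra `R`. -/
noncomputable def cornerSpace (k : Type) {R : Type} [Field k] [Ring R]
    [Algebra k R] (e f : R) : Submodule k R :=
  LinearMap.range ((LinearMap.mulRight k f).comp (LinearMap.mulLeft k e))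

/-- An algebra is Schurian if `dim (e_i A e_j) ≤ 1` for every complete set of
primitive orthogonal idempotents. -/
def IsSchurian (k A : Type) [Field k] [Ring A] [Algebra k A] : Prop :=
  ∀ {ι : Type} [Fintype ι] (e : ι → A),
    IsCompleteSetOfPrimitiveOrthogonalIdempotents e →
    ∀ i j, Module.finrank k (cornerSpace k (e i) (e j)) ≤ 1

namespace Stmt14Aux

open PathAlgebra Finsupp

variable {k V : Type} [Field k] [Quiver.{1} V] [Fintype V] [DecidableEq V]

/-- Path of length zero has equal endpoints. -/
lemma path_len_zero_eq {s t : V} (q : Quiver.Path s t) (h : q.length = 0) : s = t := by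
  cases q with
  | nil => rfl
  | cons p e => simp [Quiver.Path.length] at h

lemma path_len_zero_nil {s : V} (q : Quiver.Path s s) (h : q.length = 0) :
    q = Quiver.Path.nil := by
  cases q with
  | nil => rfl
  | cons p e => simp [Quiver.Path.length] at h

/-- Trivial path basis element. -/
noncomputable def E (a : V) : PathAlgebra k V := Finsupp.single ⟨a, a, Quiver.Path.nil⟩ 1

lemma castPath_length {a b c : V} (h : a = b) (p : Quiver.Path b c) :
    (castPath h p).length = p.length := by subst h; rfl

lemma E_mul_single (a : V) (p : Σ s t : V, Quiver.Path s t) (c : k) :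
    (E a : PathAlgebra k V) * Finsupp.single p c
      = if a = p.1 then Finsupp.single p c else 0 := by
  obtain ⟨s, t, q⟩ := p
  rw [E, single_mul_single, one_mul, mulIdx]
  by_cases h : a = s
  · subst h
    simp [Quiver.Path.nil_comp]
  · simp [h]

lemma single_mul_E (p : Σ s t : V, Quiver.Path s t) (c : k) (a : V) :
    (Finsupp.single p c : PathAlgebra k V) * E a
      = if p.2.1 = a then Finsupp.single p c else 0 := by
  obtain ⟨s, t, q⟩ := p
  rw [E, single_mul_single, mul_one, mulIdx]
  by_cases h : t = a
  · subst h
    simp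
  · simp [h]

lemma E_mul_E (a b : V) :
    (E a : PathAlgebra k V) * E b = if a = b then E b else 0 := by
  rw [show (E b : PathAlgebra k V) = Finsupp.single ⟨b, b, Quiver.Path.nil⟩ 1 from rfl,
    E_mul_single]

lemma E_mul_E_self (a : V) : (E a : PathAlgebra k V) * E a = E a := by
  rw [E_mul_E, if_pos rfl]

lemma E_mul_E_ne {a b : V} (h : a ≠ b) : (E a : PathAlgebra k V) * E b = 0 := by
  rw [E_mul_E, if_neg h]

/-- `R j` : span of paths of length at least `j`. -/
noncomputable def R (j : ℕ) : Submodule k (PathAlgebra k V) :=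
  Submodule.span k {x : PathAlgebra k V |
    ∃ p : Σ a b : V, Quiver.Path a b, j ≤ p.2.2.length ∧ x = Finsupp.single p 1}

lemma single_mem_R {j : ℕ} (p : Σ a b : V, Quiver.Path a b) (c : k)
    (h : j ≤ p.2.2.length) : Finsupp.single p c ∈ (R j : Submodule k (PathAlgebra k V)) := by
  have : Finsupp.single p c = c • Finsupp.single p 1 := by
    rw [Finsupp.smul_single, smul_eq_mul, mul_one]
  rw [this]
  exact Submodule.smul_mem _ _ (Submodule.subset_span ⟨p, h, rfl⟩)

lemma mem_R_of_support {j : ℕ} (x : PathAlgebra k V)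
    (h : ∀ p ∈ x.support, j ≤ p.2.2.length) : x ∈ (R j : Submodule k (PathAlgebra k V)) := by
  classical
  rw [← Finsupp.sum_single x]
  refine Submodule.sum_mem _ fun p hp => single_mem_R p _ (h p hp)

lemma R_top (x : PathAlgebra k V) : x ∈ (R 0 : Submodule k (PathAlgebra k V)) :=
  mem_R_of_support x fun _ _ => Nat.zero_le _

lemma R_mono {i j : ℕ} (h : i ≤ j) :
    (R j : Submodule k (PathAlgebra k V)) ≤ R i := by
  rw [R, Submodule.span_le]
  rintro x ⟨p, hp, rfl⟩
  exact single_mem_R p 1 (le_trans h hp)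

lemma R_mul {i j : ℕ} {x y : PathAlgebra k V} (hx : x ∈ R i) (hy : y ∈ R j) :
    x * y ∈ (R (i + j) : Submodule k (PathAlgebra k V)) := by
  induction hx using Submodule.span_induction with
  | mem x hx =>
    obtain ⟨p, hp, rfl⟩ := hx
    induction hy using Submodule.span_induction with
    | mem y hy =>
      obtain ⟨q, hq, rfl⟩ := hy
      rw [single_mul_single, one_mul, mulIdx]
      by_cases h : p.2.1 = q.1
      · rw [dif_pos h]
        refine Submodule.smul_mem _ _ (single_mem_R _ _ ?_)
        show i + j ≤ (p.2.2.comp (castPath h q.2.2)).length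
        rw [Quiver.Path.length_comp, castPath_length]
        omega
      · rw [dif_neg h, smul_zero]
        exact Submodule.zero_mem _
    | zero =>
      rw [mul_def, map_zero]
      exact Submodule.zero_mem _
    | add y z _ _ hy hz =>
      rw [mul_def, map_add] at *
      exact Submodule.add_mem _ hy hz
    | smul c y _ hy =>
      rw [mul_def, map_smul] at *
      exact Submodule.smul_mem _ _ hy
  | zero =>
    rw [mul_def, map_zero, LinearMap.zero_apply]
    exact Submodule.zero_mem _
  | add x z _ _ hx hz =>
    rw [mul_def, map_add, LinearMap.add_apply] at *
    exact Submodule.add_mem _ hx hz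
  | smul c x _ hx =>
    rw [mul_def, map_smul, LinearMap.smul_apply] at *
    exact Submodule.smul_mem _ _ hx

end Stmt14Aux
namespace Stmt14Aux

open PathAlgebra Finsupp

variable {k V A : Type} [Field k] [Quiver.{1} V] [Fintype V] [DecidableEq V]
  [Ring A] [Algebra k A]

variable (φ : PathAlgebra k V →ₐ[k] A)

/-- images of the trivial paths. -/
noncomputable def ff (a : V) : A := φ (E a)

/-- image of the span of paths of length at least `j`. -/
noncomputable def NN (j : ℕ) : Submodule k A := (R j).map φ.toLinearMap

lemma ff_idem (a : V) : ff φ a * ff φ a = ff φ a := by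
  rw [ff, ← map_mul, E_mul_E_self]

lemma single_nil_smul_E (a : V) (c : k) :
    Finsupp.single (⟨a, a, Quiver.Path.nil⟩ : Σ s t : V, Quiver.Path s t) c
      = c • (E a : PathAlgebra k V) := by
  rw [E, Finsupp.smul_single, smul_eq_mul, mul_one]

lemma ff_orth {a b : V} (h : a ≠ b) : ff φ a * ff φ b = 0 := by
  rw [ff, ff, ← map_mul, E_mul_E_ne h, map_zero]

lemma ff_sum : ∑ a, ff φ a = 1 := by
  rw [show (∑ a, ff φ a) = φ (∑ a, E a) from (map_sum φ _ _).symm]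
  rw [show (∑ a, E a : PathAlgebra k V) = 1 from (one_def).symm, map_one]

variable {φ}

lemma ff_ne (hadm : IsAdmissiblePresentation φ) (a : V) : ff φ a ≠ 0 := by
  intro h0
  have := hadm.2.1 (E a) h0 ⟨a, a, Quiver.Path.nil⟩ (by
    rw [E, Finsupp.mem_support_iff, Finsupp.single_eq_same]
    exact one_ne_zero)
  simp [Quiver.Path.length] at this

lemma NN_mul {i j : ℕ} {x y : A} (hx : x ∈ NN φ i) (hy : y ∈ NN φ j) :
    x * y ∈ NN φ (i + j) := by
  obtain ⟨z, hz, rfl⟩ := hx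
  obtain ⟨w, hw, rfl⟩ := hy
  exact ⟨z * w, R_mul hz hw, map_mul φ z w⟩

lemma NN_mono {i j : ℕ} (h : i ≤ j) : NN φ j ≤ NN φ i :=
  Submodule.map_mono (R_mono h)

lemma NN_mul_right {j : ℕ} {x : A} (hx : x ∈ NN φ j) (y : A)
    (hadm : IsAdmissiblePresentation φ) : x * y ∈ NN φ j := by
  obtain ⟨w, rfl⟩ := hadm.1 y
  obtain ⟨z, hz, rfl⟩ := hx
  exact ⟨z * w, by simpa using R_mul hz (R_top w), map_mul φ z w⟩

lemma NN_mul_left {j : ℕ} {x : A} (hx : x ∈ NN φ j) (y : A)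
    (hadm : IsAdmissiblePresentation φ) : y * x ∈ NN φ j := by
  obtain ⟨w, rfl⟩ := hadm.1 y
  obtain ⟨z, hz, rfl⟩ := hx
  exact ⟨w * z, by simpa using R_mul (R_top w) hz, map_mul φ w z⟩

lemma exists_NN_bot (hadm : IsAdmissiblePresentation φ) : ∃ m : ℕ, NN φ m = ⊥ := by
  obtain ⟨m, hm⟩ := hadm.2.2
  refine ⟨m, ?_⟩
  rw [NN, Submodule.eq_bot_iff]
  rintro x ⟨z, hz, rfl⟩
  induction hz using Submodule.span_induction with
  | mem z hz => obtain ⟨p, hp, rfl⟩ := hz; exact hm p hp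
  | zero => exact map_zero _
  | add y z _ _ hy hz => rw [map_add, hy, hz, add_zero]
  | smul c y _ hy => rw [map_smul, hy, smul_zero]

lemma pow_mem_NN {x : A} (hx : x ∈ NN φ 1) (r : ℕ) : x ^ (r + 1) ∈ NN φ (r + 1) := by
  induction r with
  | zero => simpa using hx
  | succ r ih =>
    rw [pow_succ]
    exact NN_mul ih hx

lemma nilpotent_of_NN1 (hadm : IsAdmissiblePresentation φ) {x : A} (hx : x ∈ NN φ 1) :
    IsNilpotent x := by
  obtain ⟨m, hm⟩ := exists_NN_bot hadm
  refine ⟨m + 1, ?_⟩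
  have := NN_mono (Nat.le_add_right m 1) (pow_mem_NN hx m)
  rw [hm] at this
  simpa using this

lemma idem_pow {B : Type} [Monoid B] {g : B} (h : g * g = g) (r : ℕ) :
    g ^ (r + 1) = g := by
  induction r with
  | zero => rw [pow_one]
  | succ r ih => rw [pow_succ, ih, h]

lemma idem_not_nilpotent {g : A} (hg : g * g = g) (hne : g ≠ 0) : ¬ IsNilpotent g := by
  rintro ⟨r, hr⟩
  cases r with
  | zero =>
    rw [pow_zero] at hr
    exact hne (by rw [← mul_one g, hr, mul_zero])
  | succ r =>
    rw [idem_pow hg] at hr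
    exact hne hr

lemma ff_notin_NN1 (hadm : IsAdmissiblePresentation φ) (a : V) : ff φ a ∉ NN φ 1 :=
  fun h => idem_not_nilpotent (ff_idem φ a) (ff_ne hadm a) (nilpotent_of_NN1 hadm h)

section Sandwich

variable (htri : ∀ (a : V) (p : Quiver.Path a a), p.length = 0)

include htri in
lemma sandwich_self (a : V) (z : PathAlgebra k V) :
    E a * z * E a ∈ Submodule.span k {(E a : PathAlgebra k V)} := by
  induction z using Finsupp.induction_linear with
  | zero =>
    rw [mul_def (E a) 0, map_zero, mul_def 0 (E a), map_zero, LinearMap.zero_apply]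
    exact Submodule.zero_mem _
  | add y z hy hz =>
    have : E a * (y + z) * E a = E a * y * E a + E a * z * E a := by
      rw [mul_def (E a) (y + z), map_add]
      rw [show (mulL (E a) y + mulL (E a) z) * E a
          = mulL (mulL (E a) y + mulL (E a) z) (E a) from rfl, map_add,
        LinearMap.add_apply]
      rfl
    rw [this]
    exact Submodule.add_mem _ hy hz
  | single p c =>
    obtain ⟨s, t, q⟩ := p
    rw [E_mul_single]
    by_cases h1 : a = s
    · rw [if_pos h1]
      subst h1
      rw [single_mul_E]
      by_cases h2 : t = a
      · subst h2
        rw [if_pos rfl]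
        have hq := path_len_zero_nil q (htri _ q)
        subst hq
        rw [single_nil_smul_E]
        exact Submodule.smul_mem _ _ (Submodule.mem_span_singleton_self _)
      · rw [if_neg h2]
        exact Submodule.zero_mem _
    · rw [if_neg h1]
      rw [mul_def 0, map_zero, LinearMap.zero_apply]
      exact Submodule.zero_mem _

lemma sandwich_ne {a b : V} (h : a ≠ b) (z : PathAlgebra k V) :
    E a * z * E b ∈ (R 1 : Submodule k (PathAlgebra k V)) := by
  induction z using Finsupp.induction_linear with
  | zero =>
    rw [mul_def (E a) 0, map_zero, mul_def 0 (E b), map_zero, LinearMap.zero_apply]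
    exact Submodule.zero_mem _
  | add y z hy hz =>
    have : E a * (y + z) * E b = E a * y * E b + E a * z * E b := by
      rw [mul_def (E a) (y + z), map_add]
      rw [show (mulL (E a) y + mulL (E a) z) * E b
          = mulL (mulL (E a) y + mulL (E a) z) (E b) from rfl, map_add,
        LinearMap.add_apply]
      rfl
    rw [this]
    exact Submodule.add_mem _ hy hz
  | single p c =>
    obtain ⟨s, t, q⟩ := p
    rw [E_mul_single]
    by_cases h1 : a = s
    · rw [if_pos h1]
      subst h1
      rw [single_mul_E]
      by_cases h2 : t = b
      · subst h2
        rw [if_pos rfl]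
        refine single_mem_R _ _ ?_
        show 1 ≤ q.length
        by_contra hlen
        have h0 : q.length = 0 := by omega
        exact h (path_len_zero_eq q h0)
      · rw [if_neg h2]
        exact Submodule.zero_mem _
    · rw [if_neg h1]
      rw [mul_def 0, map_zero, LinearMap.zero_apply]
      exact Submodule.zero_mem _

include htri in
lemma corner_self (hadm : IsAdmissiblePresentation φ) (a : V) (x : A) :
    ∃ c : k, ff φ a * x * ff φ a = c • ff φ a := by
  obtain ⟨z, rfl⟩ := hadm.1 x
  have hmem := sandwich_self htri a z
  rw [Submodule.mem_span_singleton] at hmem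
  obtain ⟨c, hc⟩ := hmem
  refine ⟨c, ?_⟩
  rw [show ff φ a * φ z * ff φ a = φ (E a * z * E a) by rw [map_mul, map_mul]; rfl,
    ← hc, map_smul]
  rfl

lemma corner_ne {a b : V} (h : a ≠ b) (hadm : IsAdmissiblePresentation φ) (x : A) :
    ff φ a * x * ff φ b ∈ NN φ 1 := by
  obtain ⟨z, rfl⟩ := hadm.1 x
  exact ⟨E a * z * E b, sandwich_ne h z, by
    show φ (E a * z * E b) = _
    rw [map_mul, map_mul]
    rfl⟩

end Sandwich

lemma decomp (hadm : IsAdmissiblePresentation φ) (x : A) :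
    ∃ (c : V → k) (ν : A), ν ∈ NN φ 1 ∧ x = (∑ a, c a • ff φ a) + ν := by
  classical
  obtain ⟨z, rfl⟩ := hadm.1 x
  set zf := z.filter (fun p => p.2.2.length = 0) with hzf
  set zg := z.filter (fun p => ¬ p.2.2.length = 0) with hzg
  have hsplit : zf + zg = z := Finsupp.filter_pos_add_filter_neg z _
  have hzf_mem : φ zf ∈ Submodule.span k (Set.range (ff φ)) := by
    rw [← Finsupp.sum_single zf, Finsupp.sum, map_sum]
    refine Submodule.sum_mem _ fun p hp => ?_
    have hlen : p.2.2.length = 0 := by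
      have := Finsupp.support_filter (p := fun p : Σ a b : V, Quiver.Path a b =>
        p.2.2.length = 0) (f := z) ▸ hp
      simp only [Finset.mem_filter] at this
      exact this.2
    obtain ⟨s, t, q⟩ := p
    have hst : s = t := path_len_zero_eq q hlen
    subst hst
    have hq : q = Quiver.Path.nil := path_len_zero_nil q hlen
    subst hq
    rw [single_nil_smul_E, map_smul]
    exact Submodule.smul_mem _ _ (Submodule.subset_span ⟨s, rfl⟩)
  rw [Submodule.mem_span_range_iff_exists_fun] at hzf_mem
  obtain ⟨c, hc⟩ := hzf_mem
  refine ⟨c, φ zg, ⟨zg, ?_, rfl⟩, ?_⟩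
  · refine mem_R_of_support _ fun p hp => ?_
    have := Finsupp.support_filter (p := fun p : Σ a b : V, Quiver.Path a b =>
      ¬ p.2.2.length = 0) (f := z) ▸ hp
    simp only [Finset.mem_filter] at this
    omega
  · rw [hc, ← map_add, hsplit]

end Stmt14Aux
namespace Stmt14Aux

open PathAlgebra Finsupp

variable {k V A : Type} [Field k] [Quiver.{1} V] [Fintype V] [DecidableEq V]
  [Ring A] [Algebra k A]

variable {φ : PathAlgebra k V →ₐ[k] A}
  (hadm : IsAdmissiblePresentation φ)
  (htri : ∀ (a : V) (p : Quiver.Path a a), p.length = 0)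

include hadm in
lemma smul_ff_cancel {a : V} {c c' : k} (h : c • ff φ a = c' • ff φ a) : c = c' := by
  by_contra hne
  have hsub : (c - c') • ff φ a = 0 := by rw [sub_smul, h, sub_self]
  have : ff φ a = 0 := by
    have := congrArg (fun y => (c - c')⁻¹ • y) hsub
    simpa [smul_smul, inv_mul_cancel₀ (sub_ne_zero_of_ne hne)] using this
  exact ff_ne hadm a this

/-- The character of `A` at vertex `a`. -/
noncomputable def chi (a : V) (x : A) : k :=
  (corner_self htri hadm a x).choose

lemma chi_spec (a : V) (x : A) :
    ff φ a * x * ff φ a = chi hadm htri a x • ff φ a :=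
  (corner_self htri hadm a x).choose_spec

lemma chi_unique {a : V} {x : A} {c : k} (h : ff φ a * x * ff φ a = c • ff φ a) :
    chi hadm htri a x = c :=
  smul_ff_cancel hadm ((chi_spec hadm htri a x).symm.trans h)

lemma chi_add (a : V) (x y : A) :
    chi hadm htri a (x + y) = chi hadm htri a x + chi hadm htri a y := by
  refine chi_unique hadm htri ?_
  rw [mul_add, add_mul, chi_spec hadm htri a x, chi_spec hadm htri a y, add_smul]

lemma chi_smul (a : V) (c : k) (x : A) :
    chi hadm htri a (c • x) = c * chi hadm htri a x := by
  refine chi_unique hadm htri ?_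
  rw [mul_smul_comm, smul_mul_assoc, chi_spec hadm htri a x, smul_smul]

lemma chi_zero (a : V) : chi hadm htri a 0 = 0 :=
  chi_unique hadm htri (by rw [mul_zero, zero_mul, zero_smul])

lemma chi_sub (a : V) (x y : A) :
    chi hadm htri a (x - y) = chi hadm htri a x - chi hadm htri a y := by
  refine chi_unique hadm htri ?_
  rw [mul_sub, sub_mul, chi_spec hadm htri a x, chi_spec hadm htri a y, sub_smul]

lemma chi_one (a : V) : chi hadm htri a 1 = 1 :=
  chi_unique hadm htri (by rw [mul_one, ff_idem, one_smul])

lemma chi_ff (a b : V) : chi hadm htri a (ff φ b) = if a = b then 1 else 0 := by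
  refine chi_unique hadm htri ?_
  by_cases h : a = b
  · subst h
    rw [if_pos rfl, ff_idem, ff_idem, one_smul]
  · rw [if_neg h, ff_orth φ h, zero_mul, zero_smul]

/-- The linear-map bundle of `chi`. -/
noncomputable def chiLin (a : V) : A →ₗ[k] k where
  toFun := chi hadm htri a
  map_add' := chi_add hadm htri a
  map_smul' := chi_smul hadm htri a

include htri in
lemma sandwich_self_R1 (a : V) {z : PathAlgebra k V} (hz : z ∈ R 1) :
    E a * z * E a = 0 := by
  induction hz using Submodule.span_induction with
  | mem z hz =>
    obtain ⟨p, hp, rfl⟩ := hz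
    obtain ⟨s, t, q⟩ := p
    rw [E_mul_single]
    by_cases h1 : a = s
    · rw [if_pos h1]
      subst h1
      rw [single_mul_E]
      by_cases h2 : t = a
      · subst h2
        have : q.length = 0 := htri _ q
        simp at hp
        omega
      · rw [if_neg h2]
    · rw [if_neg h1, mul_def 0, map_zero, LinearMap.zero_apply]
  | zero =>
    rw [mul_def (E a) 0, map_zero, mul_def 0 (E a), map_zero, LinearMap.zero_apply]
  | add y z _ _ hy hz =>
    have : E a * (y + z) * E a = E a * y * E a + E a * z * E a := by
      rw [mul_def (E a) (y + z), map_add]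
      rw [show (mulL (E a) y + mulL (E a) z) * E a
          = mulL (mulL (E a) y + mulL (E a) z) (E a) from rfl, map_add,
        LinearMap.add_apply]
      rfl
    rw [this, hy, hz, add_zero]
  | smul c y _ hy =>
    have : E a * (c • y) * E a = c • (E a * y * E a) := by
      rw [mul_def (E a) (c • y), map_smul]
      rw [show (c • mulL (E a) y) * E a = mulL (c • mulL (E a) y) (E a) from rfl,
        map_smul, LinearMap.smul_apply]
      rfl
    rw [this, hy, smul_zero]

include htri in
lemma chi_NN1 (a : V) {x : A} (hx : x ∈ NN φ 1) : chi hadm htri a x = 0 := by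
  refine chi_unique hadm htri ?_
  obtain ⟨z, hz, rfl⟩ := hx
  rw [zero_smul]
  show ff φ a * φ z * ff φ a = 0
  rw [show ff φ a * φ z * ff φ a = φ (E a * z * E a) by rw [map_mul, map_mul]; rfl,
    sandwich_self_R1 htri a hz, map_zero]

include hadm htri in
set_option maxHeartbeats 1000000 in
lemma corner_prod_zero {a b : V} (h : a ≠ b) (x y : A) :
    (ff φ a * x * ff φ b) * (ff φ b * y * ff φ a) = 0 := by
  have h2 : (ff φ a * x * ff φ b) * (ff φ b * y * ff φ a)
      = ff φ a * x * (ff φ b * ff φ b) * (y * ff φ a) := by noncomm_ring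
  have h3 : (ff φ a * x * ff φ b) * (ff φ b * y * ff φ a)
      = ff φ a * (x * ff φ b * y) * ff φ a := by
    rw [h2, ff_idem]
    noncomm_ring
  obtain ⟨c, hc⟩ := corner_self htri hadm a (x * ff φ b * y)
  have hmem : (ff φ a * x * ff φ b) * (ff φ b * y * ff φ a) ∈ NN φ (1 + 1) :=
    NN_mul (corner_ne h hadm x) (corner_ne (Ne.symm h) hadm y)
  rw [h3, hc]
  rw [h3, hc] at hmem
  by_cases hc0 : c = 0
  · rw [hc0, zero_smul]
  · exfalso
    apply ff_notin_NN1 hadm a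
    have : ff φ a = c⁻¹ • (c • ff φ a) := by rw [smul_smul, inv_mul_cancel₀ hc0, one_smul]
    rw [this]
    exact NN_mono (by omega) (Submodule.smul_mem _ _ hmem)

include hadm htri in
lemma chi_mul (a : V) (x y : A) :
    chi hadm htri a (x * y) = chi hadm htri a x * chi hadm htri a y := by
  refine chi_unique hadm htri ?_
  have hins : ff φ a * (x * y) * ff φ a
      = (ff φ a * x) * (∑ b, ff φ b) * (y * ff φ a) := by
    rw [ff_sum]
    noncomm_ring
  rw [hins, Finset.mul_sum, Finset.sum_mul]
  have hterm : ∀ b, ff φ a * x * ff φ b * (y * ff φ a)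
      = (ff φ a * x * ff φ b) * (ff φ b * y * ff φ a) := by
    intro b
    have h2 : (ff φ a * x * ff φ b) * (ff φ b * y * ff φ a)
        = ff φ a * x * (ff φ b * ff φ b) * (y * ff φ a) := by noncomm_ring
    rw [h2, ff_idem]
  rw [Finset.sum_congr rfl fun b _ => hterm b]
  rw [Finset.sum_eq_single a
    (fun b _ hb => corner_prod_zero hadm htri (Ne.symm hb) x y)
    (fun h => absurd (Finset.mem_univ a) h)]
  simp only [chi_spec hadm htri, smul_mul_assoc, mul_smul_comm, ff_idem, smul_smul]
  try rw [mul_comm]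

include htri in
lemma mem_NN1_of_chi_zero {x : A} (h : ∀ a, chi hadm htri a x = 0) : x ∈ NN φ 1 := by
  obtain ⟨c, ν, hν, hx⟩ := decomp hadm x
  have hc : ∀ b, c b = 0 := by
    intro b
    have := h b
    rw [hx] at this
    have hsum : chi hadm htri b ((∑ a, c a • ff φ a) + ν) = c b := by
      rw [chi_add, chi_NN1 hadm htri b hν, add_zero]
      rw [show chi hadm htri b (∑ a, c a • ff φ a)
          = chiLin hadm htri b (∑ a, c a • ff φ a) from rfl, map_sum]
      rw [Finset.sum_congr rfl fun a _ => by
        rw [show chiLin hadm htri b (c a • ff φ a) = c a • chi hadm htri b (ff φ a) from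
          map_smul _ _ _, chi_ff, smul_eq_mul]]
      simp [Finset.sum_ite_eq]
    rw [hsum] at this
    exact this
  rw [hx]
  have : (∑ a, c a • ff φ a) = 0 := by
    rw [Finset.sum_congr rfl fun a _ => by rw [hc a, zero_smul]]
    exact Finset.sum_const_zero
  rw [this, zero_add]
  exact hν

end Stmt14Aux
namespace Stmt14Aux

open PathAlgebra Finsupp

variable {k V A : Type} [Field k] [Quiver.{1} V] [Fintype V] [DecidableEq V]
  [Ring A] [Algebra k A]

variable {φ : PathAlgebra k V →ₐ[k] A}
  (hadm : IsAdmissiblePresentation φ)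
  (htri : ∀ (a : V) (p : Quiver.Path a a), p.length = 0)

include hadm htri in
lemma chi_idem_cases {g : A} (hg : g * g = g) (a : V) :
    chi hadm htri a g = 0 ∨ chi hadm htri a g = 1 := by
  have h1 : chi hadm htri a g * chi hadm htri a g = chi hadm htri a g := by
    rw [← chi_mul hadm htri a g g, hg]
  have h2 : chi hadm htri a g * (chi hadm htri a g - 1) = 0 := by
    rw [mul_sub, h1, mul_one, sub_self]
  rcases mul_eq_zero.mp h2 with h | h
  · exact Or.inl h
  · exact Or.inr (sub_eq_zero.mp h)

/-- One step of Newton iteration for idempotent lifting. -/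
noncomputable def newtonStep (q : A) : A := 3 * (q * q) - 2 * (q * q * q)

noncomputable def newton (g0 : A) : ℕ → A
  | 0 => g0
  | r + 1 => newtonStep (newton g0 r)

lemma newtonStep_fix_left {g q : A} (h : g * q = q) : g * newtonStep q = newtonStep q := by
  have h3 : g * (3 * (q * q)) = 3 * (q * q) := by
    rw [show g * (3 * (q * q)) = 3 * ((g * q) * q) by noncomm_ring, h]
  have h2 : g * (2 * (q * q * q)) = 2 * (q * q * q) := by
    rw [show g * (2 * (q * q * q)) = 2 * ((g * q) * q * q) by noncomm_ring, h]
  rw [newtonStep, mul_sub, h3, h2]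

lemma newtonStep_fix_right {g q : A} (h : q * g = q) : newtonStep q * g = newtonStep q := by
  have h3 : (3 * (q * q)) * g = 3 * (q * q) := by
    rw [show (3 * (q * q)) * g = 3 * (q * (q * g)) by noncomm_ring, h]
  have h2 : (2 * (q * q * q)) * g = 2 * (q * q * q) := by
    rw [show (2 * (q * q * q)) * g = 2 * (q * q * (q * g)) by noncomm_ring, h]
  rw [newtonStep, sub_mul, h3, h2]

include hadm htri in
lemma chi_newtonStep (a : V) (q : A) (hq : chi hadm htri a q = 0 ∨ chi hadm htri a q = 1) :
    chi hadm htri a (newtonStep q) = chi hadm htri a q := by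
  have hchi3 : chi hadm htri a (3 : A) = 3 := by
    rw [show (3 : A) = (3 : k) • (1 : A) by rw [Algebra.smul_def, mul_one, map_ofNat],
      chi_smul, chi_one, mul_one]
  have hchi2 : chi hadm htri a (2 : A) = 2 := by
    rw [show (2 : A) = (2 : k) • (1 : A) by rw [Algebra.smul_def, mul_one, map_ofNat],
      chi_smul, chi_one, mul_one]
  rw [newtonStep, chi_sub]
  simp only [chi_mul hadm htri]
  rw [hchi3, hchi2]
  rcases hq with h | h <;> rw [h] <;> ring

include hadm htri in
lemma newtonStep_defect {q : A} {r : ℕ} (hq : q * q - q ∈ NN φ (r + 1)) :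
    newtonStep q * newtonStep q - newtonStep q ∈ NN φ (r + 2) := by
  set t := q * q - q with ht
  have hid : newtonStep q * newtonStep q - newtonStep q
      = (t * t) * (4 * (q * q) - 4 * q) - 3 * (t * t) := by
    rw [newtonStep, ht]
    noncomm_ring
  rw [hid]
  have htt : t * t ∈ NN φ (r + 2) := by
    have := NN_mul hq hq
    exact NN_mono (by omega) this
  refine Submodule.sub_mem _ ?_ ?_
  · exact NN_mul_right htt _ hadm
  · exact NN_mul_left htt _ hadm

include hadm htri in
lemma newton_props {g g0 : A} (hl : g * g0 = g0) (hr : g0 * g = g0)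
    (hchi : ∀ a, chi hadm htri a g0 = 0 ∨ chi hadm htri a g0 = 1)
    (hdef : g0 * g0 - g0 ∈ NN φ 1) (r : ℕ) :
    g * newton g0 r = newton g0 r ∧ newton g0 r * g = newton g0 r ∧
      (∀ a, chi hadm htri a (newton g0 r) = chi hadm htri a g0) ∧
      newton g0 r * newton g0 r - newton g0 r ∈ NN φ (r + 1) := by
  induction r with
  | zero => exact ⟨hl, hr, fun a => rfl, hdef⟩
  | succ r ih =>
    obtain ⟨ihl, ihr, ihchi, ihdef⟩ := ih
    refine ⟨newtonStep_fix_left ihl, newtonStep_fix_right ihr, ?_, ?_⟩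
    · intro a
      rw [show newton g0 (r + 1) = newtonStep (newton g0 r) from rfl,
        chi_newtonStep hadm htri a _ (by rw [ihchi a]; exact hchi a), ihchi a]
    · exact newtonStep_defect hadm htri ihdef

include hadm htri in
lemma newton_idem {g g0 : A} (hl : g * g0 = g0) (hr : g0 * g = g0)
    (hchi : ∀ a, chi hadm htri a g0 = 0 ∨ chi hadm htri a g0 = 1)
    (hdef : g0 * g0 - g0 ∈ NN φ 1) :
    ∃ p : A, g * p = p ∧ p * g = p ∧
      (∀ a, chi hadm htri a p = chi hadm htri a g0) ∧ p * p = p := by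
  obtain ⟨m, hm⟩ := exists_NN_bot hadm
  obtain ⟨hl', hr', hchi', hdef'⟩ := newton_props hadm htri hl hr hchi hdef m
  refine ⟨newton g0 m, hl', hr', hchi', ?_⟩
  have : newton g0 m * newton g0 m - newton g0 m ∈ NN φ m :=
    NN_mono (by omega) hdef'
  rw [hm] at this
  have h0 := (Submodule.mem_bot k).mp this
  have := sub_eq_zero.mp h0
  exact this

include hadm htri in
lemma prim_vertex {g : A} (hprim : IsPrimitiveIdempotent g) :
    ∃ c : V, chi hadm htri c g = 1 ∧ ∀ b, b ≠ c → chi hadm htri b g = 0 := by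
  obtain ⟨hgi, hg0, hgsplit⟩ := hprim
  have hg : g * g = g := hgi
  by_cases hex : ∃ c, chi hadm htri c g = 1
  · obtain ⟨c, hc⟩ := hex
    refine ⟨c, hc, ?_⟩
    intro b hb
    rcases chi_idem_cases hadm htri hg b with h | h
    · exact h
    · -- two vertices with value 1 : split g, contradiction with primitivity
      exfalso
      set g0 := g * ff φ c * g with hg0def
      have hl : g * g0 = g0 := by
        rw [hg0def, show g * (g * ff φ c * g) = (g * g) * ff φ c * g by noncomm_ring, hg]
      have hr : g0 * g = g0 := by
        rw [hg0def, show (g * ff φ c * g) * g = g * ff φ c * (g * g) by noncomm_ring, hg]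
      have hchi0 : ∀ a, chi hadm htri a g0 = (if a = c then chi hadm htri a g else 0) := by
        intro a
        rw [hg0def, chi_mul, chi_mul, chi_ff]
        by_cases hac : a = c
        · rw [if_pos hac, if_pos hac]
          rcases chi_idem_cases hadm htri hg a with h' | h' <;> rw [h'] <;> ring
        · rw [if_neg hac, if_neg hac]
          ring
      have hchi : ∀ a, chi hadm htri a g0 = 0 ∨ chi hadm htri a g0 = 1 := by
        intro a
        rw [hchi0 a]
        by_cases hac : a = c
        · rw [if_pos hac]
          exact chi_idem_cases hadm htri hg a
        · rw [if_neg hac]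
          exact Or.inl rfl
      have hdef : g0 * g0 - g0 ∈ NN φ 1 := by
        refine mem_NN1_of_chi_zero hadm htri fun a => ?_
        rw [chi_sub, chi_mul, hchi0 a]
        by_cases hac : a = c
        · rw [if_pos hac]
          rcases chi_idem_cases hadm htri hg a with h' | h' <;> rw [h'] <;> ring
        · rw [if_neg hac]
          ring
      obtain ⟨p, hpl, hpr, hpchi, hpidem⟩ := newton_idem hadm htri hl hr hchi hdef
      have hchip_c : chi hadm htri c p = 1 := by
        rw [hpchi c, hchi0 c, if_pos rfl, hc]
      have hchip_b : chi hadm htri b p = 0 := by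
        rw [hpchi b, hchi0 b, if_neg hb]
      have hp0 : p ≠ 0 := by
        intro h0
        rw [h0, chi_zero] at hchip_c
        exact zero_ne_one hchip_c
      have hq0 : g - p ≠ 0 := by
        intro h0
        have : chi hadm htri b (g - p) = 1 := by rw [chi_sub, h, hchip_b, sub_zero]
        rw [h0, chi_zero] at this
        exact zero_ne_one this
      have horth1 : p * (g - p) = 0 := by rw [mul_sub, hpr, hpidem, sub_self]
      have horth2 : (g - p) * p = 0 := by rw [sub_mul, hpl, hpidem, sub_self]
      have hidem2 : (g - p) * (g - p) = g - p := by
        rw [sub_mul, mul_sub, mul_sub, hg, hpl, hpr, hpidem]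
        abel
      have hsum : p + (g - p) = g := by abel
      rcases hgsplit p (g - p) hpidem hidem2 horth1 horth2 hsum with h0 | h0
      · exact hp0 h0
      · exact hq0 h0
  · exfalso
    push_neg at hex
    have hall : ∀ a, chi hadm htri a g = 0 := by
      intro a
      rcases chi_idem_cases hadm htri hg a with h | h
      · exact h
      · exact absurd h (hex a)
    have := nilpotent_of_NN1 hadm (mem_NN1_of_chi_zero hadm htri hall)
    exact idem_not_nilpotent hg hg0 this

include hadm htri in
lemma prim_conj {g : A} (hprim : IsPrimitiveIdempotent g) :
    ∃ (c : V) (u : Aˣ), g * u = u * ff φ c := by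
  obtain ⟨c, hc, hcb⟩ := prim_vertex hadm htri hprim
  have hg : g * g = g := hprim.1
  set u0 := g * ff φ c + (1 - g) * (1 - ff φ c) with hu0
  have hchiu : ∀ a, chi hadm htri a u0 = 1 := by
    intro a
    rw [hu0, chi_add, chi_mul, chi_mul, chi_sub, chi_sub, chi_one, chi_ff]
    by_cases hac : a = c
    · rw [if_pos hac, hac, hc]
      ring
    · rw [if_neg hac, hcb a hac]
      ring
  have hνmem : u0 - 1 ∈ NN φ 1 := by
    refine mem_NN1_of_chi_zero hadm htri fun a => ?_
    rw [chi_sub, chi_one, hchiu a, sub_self]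
  have hunit : IsUnit u0 := by
    have hnil : IsNilpotent (u0 - 1) := nilpotent_of_NN1 hadm hνmem
    have := hnil.isUnit_add_one
    rwa [sub_add_cancel] at this
  obtain ⟨u, hu⟩ := hunit
  refine ⟨c, u, ?_⟩
  rw [hu]
  have hgu : g * u0 = g * ff φ c := by
    rw [hu0, show g * (g * ff φ c + (1 - g) * (1 - ff φ c))
        = g * g * ff φ c + (g - g * g) * (1 - ff φ c) by noncomm_ring, hg, sub_self,
      zero_mul, add_zero]
  have huf : u0 * ff φ c = g * ff φ c := by
    rw [hu0, show (g * ff φ c + (1 - g) * (1 - ff φ c)) * ff φ c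
        = g * (ff φ c * ff φ c) + (1 - g) * (ff φ c - ff φ c * ff φ c) by noncomm_ring,
      ff_idem, sub_self, mul_zero, add_zero]
  rw [hgu, huf]

end Stmt14Aux
namespace Stmt14Aux

open PathAlgebra Finsupp

variable {k V A : Type} [Field k] [Quiver.{1} V] [Fintype V] [DecidableEq V]
  [Ring A] [Algebra k A]

lemma corner_mem_iff {e f x : A} :
    x ∈ cornerSpace k e f ↔ ∃ y, e * y * f = x := by
  simp [cornerSpace, LinearMap.mem_range, LinearMap.comp_apply,
    LinearMap.mulLeft_apply, LinearMap.mulRight_apply]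

lemma corner_fix {b1 b2 x : A} (h1 : b1 * b1 = b1) (h2 : b2 * b2 = b2)
    (hx : x ∈ cornerSpace k b1 b2) : b1 * x * b2 = x := by
  obtain ⟨y, rfl⟩ := corner_mem_iff.mp hx
  calc b1 * (b1 * y * b2) * b2 = (b1 * b1) * y * (b2 * b2) := by noncomm_ring
    _ = b1 * y * b2 := by rw [h1, h2]

variable {φ : PathAlgebra k V →ₐ[k] A}
  (hadm : IsAdmissiblePresentation φ)
  (htri : ∀ (a : V) (p : Quiver.Path a a), p.length = 0)

lemma conj_corner_finrank {g1 g2 : A} {u1 u2 : Aˣ} {c d : V}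
    (h1 : g1 * u1 = ↑u1 * ff φ c) (h2 : g2 * u2 = ↑u2 * ff φ d) :
    Module.finrank k (cornerSpace k g1 g2)
      = Module.finrank k (cornerSpace k (ff φ c) (ff φ d)) := by
  have e1 : (↑u1⁻¹ : A) * g1 = ff φ c * ↑u1⁻¹ := by
    calc (↑u1⁻¹ : A) * g1 = ↑u1⁻¹ * (g1 * ↑u1) * ↑u1⁻¹ := by
          rw [mul_assoc, Units.mul_inv_cancel_right]
      _ = ↑u1⁻¹ * (↑u1 * ff φ c) * ↑u1⁻¹ := by rw [h1]
      _ = ff φ c * ↑u1⁻¹ := by rw [Units.inv_mul_cancel_left]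
  -- the conjugation equivalence
  set L : A ≃ₗ[k] A := LinearEquiv.ofLinear
    ((LinearMap.mulRight k (↑u2 : A)).comp (LinearMap.mulLeft k (↑u1⁻¹ : A)))
    ((LinearMap.mulRight k (↑u2⁻¹ : A)).comp (LinearMap.mulLeft k (↑u1 : A)))
    (by
      ext x
      simp [LinearMap.comp_apply, LinearMap.mulLeft_apply, LinearMap.mulRight_apply,
        mul_assoc, Units.inv_mul_cancel_left, Units.mul_inv_cancel_left,
        Units.inv_mul_cancel_right, Units.mul_inv_cancel_right])
    (by
      ext x
      simp [LinearMap.comp_apply, LinearMap.mulLeft_apply, LinearMap.mulRight_apply,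
        mul_assoc, Units.inv_mul_cancel_left, Units.mul_inv_cancel_left,
        Units.inv_mul_cancel_right, Units.mul_inv_cancel_right]) with hL
  have hLapp : ∀ x : A, L x = ↑u1⁻¹ * x * ↑u2 := fun x => rfl
  have keyA : ∀ y : A, (↑u1⁻¹ : A) * (g1 * y * g2) * ↑u2
      = ff φ c * ((↑u1⁻¹ : A) * y * ↑u2) * ff φ d := by
    intro y
    calc (↑u1⁻¹ : A) * (g1 * y * g2) * ↑u2
        = ((↑u1⁻¹ : A) * g1) * y * (g2 * ↑u2) := by noncomm_ring
      _ = (ff φ c * ↑u1⁻¹) * y * (↑u2 * ff φ d) := by rw [e1, h2]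
      _ = ff φ c * ((↑u1⁻¹ : A) * y * ↑u2) * ff φ d := by noncomm_ring
  have hmap : (cornerSpace k g1 g2).map (L : A →ₗ[k] A)
      = cornerSpace k (ff φ c) (ff φ d) := by
    apply le_antisymm
    · rintro _ ⟨x, hx, rfl⟩
      obtain ⟨y, rfl⟩ := corner_mem_iff.mp hx
      rw [corner_mem_iff]
      exact ⟨↑u1⁻¹ * y * ↑u2, by rw [← keyA y]; rfl⟩
    · rintro x hx
      obtain ⟨y, rfl⟩ := corner_mem_iff.mp hx
      refine ⟨g1 * (↑u1 * y * ↑u2⁻¹) * g2, corner_mem_iff.mpr ⟨_, rfl⟩, ?_⟩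
      show L _ = _
      rw [hLapp, keyA]
      congr 1
      · congr 1
        simp [mul_assoc, Units.inv_mul_cancel_left, Units.mul_inv_cancel_left,
          Units.inv_mul_cancel_right, Units.mul_inv_cancel_right]
  rw [← hmap, LinearEquiv.finrank_map_eq]

include hadm htri in
lemma corner_diag_le_one [FiniteDimensional k A] (c : V) :
    Module.finrank k (cornerSpace k (ff φ c) (ff φ c)) ≤ 1 := by
  have hle : cornerSpace k (ff φ c) (ff φ c) ≤ Submodule.span k {ff φ c} := by
    rintro x hx
    obtain ⟨y, rfl⟩ := corner_mem_iff.mp hx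
    rw [chi_spec hadm htri c y]
    exact Submodule.smul_mem _ _ (Submodule.mem_span_singleton_self _)
  calc Module.finrank k (cornerSpace k (ff φ c) (ff φ c))
      ≤ Module.finrank k (Submodule.span k {ff φ c}) := Submodule.finrank_mono hle
    _ = 1 := finrank_span_singleton (ff_ne hadm c)

lemma exists_indep_pair [FiniteDimensional k A] {W : Submodule k A}
    (h : 2 ≤ Module.finrank k W) :
    ∃ u v : A, u ∈ W ∧ v ∈ W ∧ ∀ a b : k, a • u + b • v = 0 → a = 0 ∧ b = 0 := by
  have : Module.Finite k W := inferInstance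
  set b := Module.finBasis k W with hb
  set i0 : Fin (Module.finrank k W) := ⟨0, by omega⟩ with hi0
  set i1 : Fin (Module.finrank k W) := ⟨1, by omega⟩ with hi1
  have hne01 : i0 ≠ i1 := by
    rw [hi0, hi1]
    simp [Fin.ext_iff]
  refine ⟨↑(b i0), ↑(b i1), (b i0).2, (b i1).2, fun a c hac => ?_⟩
  have hW : a • b i0 + c • b i1 = (0 : W) := by
    apply Subtype.coe_injective
    push_cast
    exact hac
  have h0 : a = 0 := by
    have := congrArg (fun w => b.repr w i0) hW
    simpa [map_add, map_smul, Module.Basis.repr_self, Finsupp.single_apply, hne01,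
      Ne.symm hne01] using this
  have h1 : c = 0 := by
    have := congrArg (fun w => b.repr w i1) hW
    simpa [map_add, map_smul, Module.Basis.repr_self, Finsupp.single_apply, hne01,
      Ne.symm hne01] using this
  exact ⟨h0, h1⟩

end Stmt14Aux
namespace Stmt14Aux

variable {k A : Type} [Field k] [Ring A] [Algebra k A]

section Brick

variable (e : A)

/-- The submodule by which we quotient. -/
noncomputable def Kmod (w : A) : Submodule A A := Submodule.span A {w, 1 - e}

noncomputable def Bmod (w : A) : ModuleCat.{0} A := ModuleCat.of A (A ⧸ Kmod e w)

variable {e} {ε : A}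
variable (he : e * e = e) (hε : ε * ε = ε) (hne : e ≠ 0)
  (h1 : ∀ x : A, ∃ c : k, e * x * e = c • e)
  (h2 : ∀ x y : A, (e * x * ε) * (ε * y * e) = 0)
  (h3 : ∀ x : A, ∃ c : k, ε * x * ε = c • ε)

section

variable {w : A} (hw : ε * w * e = w)

include hε hw in
lemma eps_w : ε * w = w :=
  calc ε * w = ε * (ε * w * e) := by rw [hw]
    _ = ε * ε * w * e := by noncomm_ring
    _ = w := by rw [hε, hw]

include he hw in
lemma w_e : w * e = w :=
  calc w * e = ε * w * e * e := by rw [hw]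
    _ = ε * w * (e * e) := by rw [mul_assoc]
    _ = w := by rw [he, hw]

include he hne hε h2 hw in
lemma one_notin_K : (1 : A) ∉ Kmod e w := by
  intro hmem
  rw [Kmod, Submodule.mem_span_pair] at hmem
  obtain ⟨r, s, hrs⟩ := hmem
  simp only [smul_eq_mul] at hrs
  have h1e : (r * w + s * (1 - e)) * e = e := by rw [hrs, one_mul]
  have h2e : (1 - e) * e = 0 := by rw [sub_mul, one_mul, he, sub_self]
  rw [add_mul, mul_assoc, w_e he hw, mul_assoc, h2e, mul_zero, add_zero] at h1e
  have h0 := h2 r w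
  rw [hw] at h0
  have : e = 0 :=
    calc e = e * e := he.symm
      _ = e * (r * w) := by rw [h1e]
      _ = e * r * w := by noncomm_ring
      _ = e * r * (ε * w) := by rw [eps_w hε hw]
      _ = e * r * ε * w := by noncomm_ring
      _ = 0 := h0
  exact hne this

end

include he h1 in
/-- Every linear map between the quotient modules is given by a central scalar. -/
lemma hom_scalar {w w' : A} (h : (A ⧸ Kmod e w) →ₗ[A] (A ⧸ Kmod e w')) :
    ∃ c : k, ∀ y : A, h (Submodule.Quotient.mk y)
      = Submodule.Quotient.mk (algebraMap k A c * y) := by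
  obtain ⟨x, hx⟩ := Submodule.Quotient.mk_surjective _ (h (Submodule.Quotient.mk 1))
  obtain ⟨c, hc⟩ := h1 x
  refine ⟨c, fun y => ?_⟩
  have hsmul : ∀ (r z : A) (w₀ : A),
      r • (Submodule.Quotient.mk z : A ⧸ Kmod e w₀) = Submodule.Quotient.mk (r * z) :=
    fun r z w₀ => rfl
  have h1e : ∀ w₀ : A, (1 : A) - e ∈ Kmod e w₀ :=
    fun w₀ => Submodule.subset_span (by simp)
  have hme : ∀ w₀ : A,
      (Submodule.Quotient.mk e : A ⧸ Kmod e w₀) = Submodule.Quotient.mk 1 := by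
    intro w₀
    rw [Submodule.Quotient.eq]
    simpa using (Kmod e w₀).neg_mem (h1e w₀)
  -- h (mk 1) = mk (e * x)
  have step1 : h (Submodule.Quotient.mk 1) = Submodule.Quotient.mk (e * x) := by
    calc h (Submodule.Quotient.mk 1) = h (Submodule.Quotient.mk e) := by rw [hme]
      _ = h (e • Submodule.Quotient.mk 1) := by rw [hsmul, mul_one]
      _ = e • h (Submodule.Quotient.mk 1) := map_smul h e _
      _ = e • (Submodule.Quotient.mk x : A ⧸ Kmod e w') := by rw [hx]
      _ = Submodule.Quotient.mk (e * x) := hsmul e x w'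
  -- mk (e * x) = mk (e * x * e)
  have step2 : (Submodule.Quotient.mk (e * x) : A ⧸ Kmod e w')
      = Submodule.Quotient.mk (e * x * e) := by
    rw [Submodule.Quotient.eq]
    have : e * x - e * x * e = (e * x) * (1 - e) := by noncomm_ring
    rw [this]
    exact (Kmod e w').smul_mem (e * x) (h1e w')
  -- mk (e * x * e) = mk (algebraMap c)
  have step3 : (Submodule.Quotient.mk (e * x * e) : A ⧸ Kmod e w')
      = Submodule.Quotient.mk (algebraMap k A c) := by
    rw [hc, Algebra.smul_def, Submodule.Quotient.eq]
    have : algebraMap k A c * e - algebraMap k A c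
        = (-(algebraMap k A c)) * (1 - e) := by noncomm_ring
    rw [this]
    exact (Kmod e w').smul_mem _ (h1e w')
  calc h (Submodule.Quotient.mk y) = h (y • Submodule.Quotient.mk 1) := by
        rw [hsmul, mul_one]
    _ = y • h (Submodule.Quotient.mk 1) := map_smul h y _
    _ = y • (Submodule.Quotient.mk (algebraMap k A c) : A ⧸ Kmod e w') := by
        rw [step1, step2, step3]
    _ = Submodule.Quotient.mk (y * algebraMap k A c) := hsmul y _ w'
    _ = Submodule.Quotient.mk (algebraMap k A c * y) := by
        rw [Algebra.commutes]

include he hε hne h1 h2 in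
lemma bmod_isBrick {w : A} (hw : ε * w * e = w) : IsBrick A (Bmod e w) := by
  have hnt : Nontrivial (A ⧸ Kmod e w) := by
    refine ⟨Submodule.Quotient.mk 1, 0, ?_⟩
    rw [Ne, Submodule.Quotient.mk_eq_zero]
    exact one_notin_K he hε hne h2 hw
  refine ⟨Module.Finite.of_surjective (Kmod e w).mkQ
      (Submodule.Quotient.mk_surjective _), hnt, ?_⟩
  intro f hf
  have hg : ∃ g : (A ⧸ Kmod e w) →ₗ[A] (A ⧸ Kmod e w),
      (⇑f : (A ⧸ Kmod e w) → (A ⧸ Kmod e w)) = ⇑g := ⟨f, rfl⟩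
  obtain ⟨g, hfg⟩ := hg
  have hg0 : g ≠ 0 := by
    intro h0
    apply hf
    have : (⇑f : (A ⧸ Kmod e w) → (A ⧸ Kmod e w)) = 0 := by rw [hfg, h0]; rfl
    exact LinearMap.ext fun m => congrFun this m
  show Function.Bijective (⇑f : (A ⧸ Kmod e w) → (A ⧸ Kmod e w))
  rw [hfg]
  obtain ⟨c, hcf⟩ := hom_scalar he h1 g
  have hc0 : c ≠ 0 := by
    rintro rfl
    apply hg0
    refine LinearMap.ext fun m => ?_
    obtain ⟨y, rfl⟩ := Submodule.Quotient.mk_surjective (Kmod e w) m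
    rw [hcf y]
    simp
  refine Function.bijective_iff_has_inverse.mpr
    ⟨fun m => algebraMap k A c⁻¹ • m, fun m => ?_, fun m => ?_⟩
  · obtain ⟨y, rfl⟩ := Submodule.Quotient.mk_surjective (Kmod e w) m
    show algebraMap k A c⁻¹ • g (Submodule.Quotient.mk y) = _
    rw [hcf y]
    have : algebraMap k A c⁻¹ • (Submodule.Quotient.mk (algebraMap k A c * y) :
        A ⧸ Kmod e w) = Submodule.Quotient.mk (algebraMap k A c⁻¹ *
          (algebraMap k A c * y)) := rfl
    rw [this, ← mul_assoc, ← map_mul, inv_mul_cancel₀ hc0, map_one, one_mul]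
  · obtain ⟨y, rfl⟩ := Submodule.Quotient.mk_surjective (Kmod e w) m
    show g (algebraMap k A c⁻¹ • (Submodule.Quotient.mk y : A ⧸ Kmod e w)) = _
    have : algebraMap k A c⁻¹ • (Submodule.Quotient.mk y : A ⧸ Kmod e w)
        = Submodule.Quotient.mk (algebraMap k A c⁻¹ * y) := rfl
    rw [this, hcf, ← mul_assoc, ← map_mul, mul_inv_cancel₀ hc0, map_one, one_mul]

include he hε hne h1 h2 h3 in
lemma bmod_noniso {w w' : A} (hw : ε * w * e = w) (hw' : ε * w' * e = w')
    (hiso : Nonempty ((A ⧸ Kmod e w) ≃ₗ[A] (A ⧸ Kmod e w'))) :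
    ∃ c : k, w = c • w' := by
  obtain ⟨g⟩ := hiso
  obtain ⟨c, hcf⟩ := hom_scalar he h1 (g.toLinearMap : (A ⧸ Kmod e w) →ₗ[A] (A ⧸ Kmod e w'))
  have hc0 : c ≠ 0 := by
    rintro rfl
    have h10 : g (Submodule.Quotient.mk 1) = 0 := by
      have := hcf 1; simpa using this
    have : (Submodule.Quotient.mk 1 : A ⧸ Kmod e w) = 0 := by
      apply g.injective
      rw [h10, map_zero]
    rw [Submodule.Quotient.mk_eq_zero] at this
    exact one_notin_K he hε hne h2 hw this
  -- w maps to 0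
  have hw0 : (Submodule.Quotient.mk w : A ⧸ Kmod e w) = 0 :=
    (Submodule.Quotient.mk_eq_zero _).mpr (Submodule.subset_span (by simp))
  have : (Submodule.Quotient.mk (algebraMap k A c * w) : A ⧸ Kmod e w') = 0 := by
    rw [← hcf w]
    show g _ = 0
    rw [hw0, map_zero]
  rw [Submodule.Quotient.mk_eq_zero] at this
  have hwK : w ∈ Kmod e w' := by
    have h2' := (Kmod e w').smul_mem (algebraMap k A c⁻¹) this
    simp only [smul_eq_mul, ← mul_assoc, ← map_mul, inv_mul_cancel₀ hc0, map_one,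
      one_mul] at h2'
    exact h2'
  rw [Kmod, Submodule.mem_span_pair] at hwK
  obtain ⟨r, s, hrs⟩ := hwK
  simp only [smul_eq_mul] at hrs
  have hre : (r * w' + s * (1 - e)) * e = w := by rw [hrs, w_e he hw]
  have h2e : (1 - e) * e = 0 := by rw [sub_mul, one_mul, he, sub_self]
  rw [add_mul, mul_assoc, w_e he hw', mul_assoc, h2e, mul_zero, add_zero] at hre
  -- w = r * w' ; sandwich with ε
  obtain ⟨c', hc'⟩ := h3 r
  refine ⟨c', ?_⟩
  have hrw : r * w' = r * (ε * w') := by rw [eps_w hε hw']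
  calc w = ε * w := (eps_w hε hw).symm
    _ = ε * (r * w') := by rw [hre]
    _ = ε * (r * (ε * w')) := by rw [← hrw]
    _ = (ε * r * ε) * w' := by noncomm_ring
    _ = (c' • ε) * w' := by rw [hc']
    _ = c' • (ε * w') := smul_mul_assoc c' ε w'
    _ = c' • w' := by rw [eps_w hε hw']

include he hε hne h1 h2 h3 in
lemma brick_not_ttf [Infinite k] (u v : A) (hu : ε * u * e = u) (hv : ε * v * e = v)
    (hind : ∀ a b : k, a • u + b • v = 0 → a = 0 ∧ b = 0) :
    ¬ IsTauTiltingFinite A := by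
  rintro ⟨n, M, hM⟩
  have hwfun : ∀ lam : k, ε * (u - lam • v) * e = u - lam • v := by
    intro lam
    rw [mul_sub, sub_mul, hu, mul_smul_comm, smul_mul_assoc, hv]
  have hbr : ∀ lam : k, IsBrick A (Bmod e (u - lam • v)) :=
    fun lam => bmod_isBrick he hε hne h1 h2 (hwfun lam)
  choose F hF using fun lam : k => hM _ (hbr lam)
  obtain ⟨l1, l2, hnel, heq⟩ := Finite.exists_ne_map_eq_of_infinite F
  obtain ⟨g1⟩ := hF l1
  obtain ⟨g2⟩ := hF l2
  rw [heq] at g1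
  have hiso : Nonempty ((A ⧸ Kmod e (u - l1 • v)) ≃ₗ[A] (A ⧸ Kmod e (u - l2 • v))) :=
    ⟨g1.trans g2.symm⟩
  obtain ⟨c, hc⟩ := bmod_noniso he hε hne h1 h2 h3 (hwfun l1) (hwfun l2) hiso
  -- u - l1 v = c (u - l2 v)
  have h0 : (1 - c) • u + (c * l2 - l1) • v = (u - l1 • v) - c • (u - l2 • v) := by
    rw [sub_smul, sub_smul, one_smul, smul_sub, smul_smul]
    abel
  have : (1 - c) • u + (c * l2 - l1) • v = 0 := by rw [h0, hc, sub_self]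
  obtain ⟨hc1, hc2⟩ := hind _ _ this
  apply hnel
  have hcc : c = 1 := by linear_combination -hc1
  rw [hcc, one_mul] at hc2
  linear_combination -hc2

end Brick
end Stmt14Aux

/-- A simply connected algebra which is not Schurian is τ-tilting infinite. -/
theorem stmt14 (k A : Type) [Field k] [IsAlgClosed k] [Ring A] [Algebra k A]
    [FiniteDimensional k A] (hsc : IsSimplyConnectedAlg k A)
    (hns : ¬ IsSchurian k A) : ¬ IsTauTiltingFinite A := by
  classical
  have hns' : ∃ (ι : Type) (_ : Fintype ι) (e : ι → A),
      IsCompleteSetOfPrimitiveOrthogonalIdempotents e ∧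
        ∃ i j, 2 ≤ Module.finrank k (cornerSpace k (e i) (e j)) := by
    by_contra hcon
    apply hns
    intro ι instF e hce i j
    by_contra hgt
    exact hcon ⟨ι, instF, e, hce, i, j, by omega⟩
  obtain ⟨ι, instF, e, hce, i, j, hdim⟩ := hns'
  obtain ⟨⟨n, G, φ, hadm⟩, hall⟩ := hsc
  letI := G
  have htri := (hall n G φ hadm).1
  obtain ⟨c, u1, hu1⟩ := Stmt14Aux.prim_conj hadm htri (hce.1 i)
  obtain ⟨d, u2, hu2⟩ := Stmt14Aux.prim_conj hadm htri (hce.1 j)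
  have hdim' : 2 ≤ Module.finrank k (cornerSpace k (Stmt14Aux.ff φ c) (Stmt14Aux.ff φ d)) := by
    rw [← Stmt14Aux.conj_corner_finrank hu1 hu2]
    exact hdim
  have hcd : c ≠ d := by
    intro h
    subst h
    have := Stmt14Aux.corner_diag_le_one hadm htri c
    omega
  obtain ⟨u, v, hu, hv, hind⟩ := Stmt14Aux.exists_indep_pair hdim'
  exact Stmt14Aux.brick_not_ttf (Stmt14Aux.ff_idem φ d) (Stmt14Aux.ff_idem φ c)
    (Stmt14Aux.ff_ne hadm d)
    (fun x => Stmt14Aux.corner_self htri hadm d x)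
    (fun x y => Stmt14Aux.corner_prod_zero hadm htri (Ne.symm hcd) x y)
    (fun x => Stmt14Aux.corner_self htri hadm c x)
    u v (Stmt14Aux.corner_fix (Stmt14Aux.ff_idem φ c) (Stmt14Aux.ff_idem φ d) hu)
    (Stmt14Aux.corner_fix (Stmt14Aux.ff_idem φ c) (Stmt14Aux.ff_idem φ d) hv) hind
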